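/- Suppose the 2^q-dimensional Hermitian matrix H is a (q, η, ε)-embedding of the 2^q-dimensional Hermitian matrix A with embedding subspace S (so A = P_S A P_S). Then for every fixed evolution time t ≥ 0, one has ‖P_S exp(−i H t) P_S − P_S exp(−i A t) P_S‖ ≤ (2 η ‖H‖ + ε) t. -/

import Mathlib

set_option maxHeartbeats 1000000

open Matrix
open scoped Matrix.Norms.L2Operator

/-- `H` is a `(q, η, ε)`-embedding of `A` with embedding subspace given by the orthogonal
projection `PS`, witnessed by the unitary `U`. -/
def IsHamiltonianEmbedding {N : ℕ} (PS U H A : Matrix (Fin N) (Fin N) ℂ) (η ε : ℝ) : Prop :=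
  U ∈ Matrix.unitaryGroup (Fin N) ℂ ∧
  PS * (Uᴴ * H * U) * (1 - PS) = 0 ∧
  ‖(1 : Matrix (Fin N) (Fin N) ℂ) - U‖ ≤ η ∧
  ‖PS * (Uᴴ * H * U) * PS - A‖ ≤ ε

section Aux

open NormedSpace

variable {N : ℕ}

local notation "Mat" => Matrix (Fin N) (Fin N) ℂ

/-- exp of a skew-Hermitian matrix is unitary. -/
lemma exp_skew_mem_unitary (X : Mat) (hX : Xᴴ = -X) :
    exp X ∈ unitary Mat := by
  have h1 : star (exp X) * exp X = 1 := by
    rw [Matrix.star_eq_conjTranspose, ← Matrix.exp_conjTranspose, hX,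
      ← Matrix.exp_add_of_commute (-X) X (Commute.neg_left (Commute.refl X)), neg_add_cancel, exp_zero]
  have h2 : exp X * star (exp X) = 1 := by
    rw [Matrix.star_eq_conjTranspose, ← Matrix.exp_conjTranspose, hX,
      ← Matrix.exp_add_of_commute X (-X) (Commute.neg_right (Commute.refl X)), add_neg_cancel, exp_zero]
  exact ⟨h1, h2⟩

lemma norm_exp_skew_le_one [Nonempty (Fin N)] (X : Mat) (hX : Xᴴ = -X) :
    ‖exp X‖ ≤ 1 :=
  le_of_eq (CStarRing.norm_of_mem_unitary (exp_skew_mem_unitary X hX))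

lemma smul_skew (t : ℝ) (X : Mat) (hX : X.IsHermitian) :
    ((-(Complex.I * (t : ℂ))) • X)ᴴ = -((-(Complex.I * (t : ℂ))) • X) := by
  rw [Matrix.conjTranspose_smul, hX.eq, ← neg_smul]
  congr 1
  simp [Complex.ext_iff]

/-- Key estimate: Lipschitz bound for unitary evolutions. -/
lemma exp_sub_exp_norm_le [Nonempty (Fin N)] (X Y : Mat) (hX : X.IsHermitian)
    (hY : Y.IsHermitian) (t : ℝ) (ht : 0 ≤ t) :
    ‖exp ((-(Complex.I * (t : ℂ))) • X) - exp ((-(Complex.I * (t : ℂ))) • Y)‖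
      ≤ t * ‖X - Y‖ := by
  set c : ℂ := -(Complex.I * (t : ℂ)) with hc
  set M : Mat := c • X with hM
  set L : Mat := c • Y with hL
  -- skewness of real multiples
  have skewM : ∀ s : ℝ, (s • M)ᴴ = -(s • M) := by
    intro s
    have : s • M = (-(Complex.I * ((s * t : ℝ) : ℂ))) • X := by
      rw [hM, hc, ← smul_assoc]
      congr 1
      rw [Complex.real_smul]
      push_cast
      ring
    rw [this]
    exact smul_skew (s * t) X hX
  have skewL : ∀ s : ℝ, (s • L)ᴴ = -(s • L) := by
    intro s
    have : s • L = (-(Complex.I * ((s * t : ℝ) : ℂ))) • Y := by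
      rw [hL, hc, ← smul_assoc]
      congr 1
      rw [Complex.real_smul]
      push_cast
      ring
    rw [this]
    exact smul_skew (s * t) Y hY
  -- the interpolating function
  set g : ℝ → Mat := fun s => exp (s • M) * exp ((1 - s) • L) with hg
  have hexpR : (exp : Mat → Mat) = exp := rfl
  have hderiv : ∀ s : ℝ, HasDerivAt g
      (exp (s • M) * (M - L) * exp ((1 - s) • L)) s := by
    intro s
    have h1 : HasDerivAt (fun u : ℝ => exp (u • M)) (exp (s • M) * M) s := by
      rw [← hexpR]
      exact hasDerivAt_exp_smul_const M s
    have h2' : HasDerivAt (fun u : ℝ => exp (u • L)) (exp ((1 - s) • L) * L) (1 - s) := by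
      rw [← hexpR]
      exact hasDerivAt_exp_smul_const L (1 - s)
    have h3 : HasDerivAt (fun u : ℝ => (1 : ℝ) - u) (-1) s := by
      simpa using (hasDerivAt_id s).const_sub 1
    have h2 : HasDerivAt (fun u : ℝ => exp ((1 - u) • L))
        ((-1 : ℝ) • (exp ((1 - s) • L) * L)) s := h2'.scomp s h3
    have := h1.mul h2
    have hcomm : L * exp ((1 - s) • L) = exp ((1 - s) • L) * L := by
      have : Commute L ((1 - s) • L) := (Commute.refl L).smul_right _
      exact (this.exp_right)
    refine this.congr_deriv ?_
    symm
    rw [neg_one_smul]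
    rw [mul_sub, sub_mul, mul_assoc, ← hcomm]
    ring_nf
    noncomm_ring
  have hnorm : ∀ s : ℝ, ‖exp (s • M) * (M - L) * exp ((1 - s) • L)‖ ≤ t * ‖X - Y‖ := by
    intro s
    have e1 : ‖exp (s • M)‖ ≤ 1 := norm_exp_skew_le_one _ (skewM s)
    have e2 : ‖exp ((1 - s) • L)‖ ≤ 1 := norm_exp_skew_le_one _ (skewL (1 - s))
    have eML : ‖M - L‖ = t * ‖X - Y‖ := by
      rw [hM, hL, ← smul_sub, norm_smul]
      congr 1
      simp [hc, abs_of_nonneg ht]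
    calc ‖exp (s • M) * (M - L) * exp ((1 - s) • L)‖
        ≤ ‖exp (s • M) * (M - L)‖ * ‖exp ((1 - s) • L)‖ := norm_mul_le _ _
      _ ≤ ‖exp (s • M)‖ * ‖M - L‖ * ‖exp ((1 - s) • L)‖ := by
          gcongr; exact norm_mul_le _ _
      _ ≤ 1 * ‖M - L‖ * 1 :=
          mul_le_mul (mul_le_mul_of_nonneg_right e1 (norm_nonneg _)) e2 (norm_nonneg _)
            (by positivity)
      _ = t * ‖X - Y‖ := by rw [one_mul, mul_one, eML]
  have key := (convex_univ (𝕜 := ℝ) (E := ℝ)).norm_image_sub_le_of_norm_hasDerivWithin_le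
      (f := g) (f' := fun s => exp (s • M) * (M - L) * exp ((1 - s) • L))
      (fun x _ => (hderiv x).hasDerivWithinAt) (fun x _ => hnorm x)
      (Set.mem_univ (0 : ℝ)) (Set.mem_univ (1 : ℝ))
  have g1 : g 1 = exp M := by
    simp [hg, one_smul, sub_self, zero_smul, exp_zero]
  have g0 : g 0 = exp L := by
    simp [hg, zero_smul, exp_zero, sub_zero, one_smul]
  rw [g1, g0] at key
  simpa using key

/-- If `P * M = B * P` then `P * exp M = exp B * P`. -/
lemma proj_exp (P M B : Mat) (h : P * M = B * P) :
    P * exp M = exp B * P := by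
  have hpow : ∀ k : ℕ, P * M ^ k = B ^ k * P := by
    intro k
    induction k with
    | zero => simp
    | succ k ih =>
        rw [pow_succ, ← mul_assoc, ih, mul_assoc, h, ← mul_assoc, ← pow_succ]
  rw [exp_eq_tsum (𝕂 := ℂ)]
  have hsum : Summable (fun k : ℕ => ((k.factorial : ℂ))⁻¹ • M ^ k) := expSeries_summable' (𝕂 := ℂ) M
  have hsum2 : Summable (fun k : ℕ => ((k.factorial : ℂ))⁻¹ • B ^ k) := expSeries_summable' (𝕂 := ℂ) B
  calc P * ∑' k : ℕ, ((k.factorial : ℂ))⁻¹ • M ^ k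
      = ∑' k : ℕ, P * (((k.factorial : ℂ))⁻¹ • M ^ k) := by
        exact (hsum.tsum_mul_left P).symm
    _ = ∑' k : ℕ, (((k.factorial : ℂ))⁻¹ • B ^ k) * P :=
        tsum_congr fun k => by rw [Matrix.mul_smul, hpow k, Matrix.smul_mul]
    _ = (∑' k : ℕ, ((k.factorial : ℂ))⁻¹ • B ^ k) * P := by
        exact hsum2.tsum_mul_right P

end Aux

/-- **Hamiltonian simulation with Hamiltonian embedding.** If the Hermitian matrix `H` on
`ℂ^(2^q)` is a `(q, η, ε)`-embedding of the Hermitian matrix `A` (with `A = P_S A P_S`), then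
for every `t ≥ 0`,
`‖P_S exp(-iHt) P_S - P_S exp(-iAt) P_S‖ ≤ (2η‖H‖ + ε) t`. -/
theorem embedding_simulation_error (q : ℕ) (η ε : ℝ) (hη : 0 < η) (hε : 0 < ε)
    (PS H A : Matrix (Fin (2 ^ q)) (Fin (2 ^ q)) ℂ)
    (hPSherm : PS.IsHermitian) (hPSproj : PS * PS = PS)
    (hH : H.IsHermitian) (hA : A.IsHermitian) (hAS : A = PS * A * PS)
    (hemb : ∃ U, IsHamiltonianEmbedding PS U H A η ε)
    (t : ℝ) (ht : 0 ≤ t) :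
    ‖PS * NormedSpace.exp ((-(Complex.I * (t : ℂ))) • H) * PS -
        PS * NormedSpace.exp ((-(Complex.I * (t : ℂ))) • A) * PS‖ ≤
      (2 * η * ‖H‖ + ε) * t := by
  haveI : Nonempty (Fin (2 ^ q)) := ⟨⟨0, by positivity⟩⟩
  obtain ⟨U, hUmem, hblock, hUnorm, hApprox⟩ := hemb
  set H' : Matrix (Fin (2 ^ q)) (Fin (2 ^ q)) ℂ := Uᴴ * H * U with hH'def
  set B : Matrix (Fin (2 ^ q)) (Fin (2 ^ q)) ℂ := PS * H' * PS with hBdef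
  set c : ℂ := -(Complex.I * (t : ℂ)) with hc
  have hUU : Uᴴ * U = 1 := by
    simpa [Matrix.star_eq_conjTranspose] using hUmem.1
  have hUU' : U * Uᴴ = 1 := by
    simpa [Matrix.star_eq_conjTranspose] using hUmem.2
  -- H' is Hermitian
  have hH'herm : H'.IsHermitian := by
    have : H'ᴴ = H' := by
      rw [hH'def, Matrix.conjTranspose_mul, Matrix.conjTranspose_mul,
        Matrix.conjTranspose_conjTranspose, hH.eq, Matrix.mul_assoc]
    exact this
  -- PS commutes with H'
  have hPH : PS * H' = PS * H' * PS := by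
    have h0 := hblock
    rw [Matrix.mul_sub, Matrix.mul_one, sub_eq_zero] at h0
    exact h0
  have hHP : H' * PS = PS * H' * PS := by
    have := congrArg Matrix.conjTranspose hPH
    rw [Matrix.conjTranspose_mul, hH'herm.eq, hPSherm.eq, Matrix.conjTranspose_mul,
      Matrix.conjTranspose_mul, hH'herm.eq, hPSherm.eq] at this
    exact this.trans (Matrix.mul_assoc PS H' PS).symm
  -- B is Hermitian
  have hBherm : B.IsHermitian := by
    have h := Matrix.isHermitian_mul_mul_conjTranspose PS hH'herm
    rwa [hPSherm.eq, ← hBdef] at h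
  -- norm of PS
  have hPSn : ‖PS‖ ≤ 1 := by
    have h2 : ‖PS‖ * ‖PS‖ = ‖PS‖ := by
      rw [← CStarRing.norm_star_mul_self (x := PS), Matrix.star_eq_conjTranspose,
        hPSherm.eq, hPSproj]
    nlinarith [norm_nonneg PS]
  have hPDP : ∀ D : Matrix (Fin (2 ^ q)) (Fin (2 ^ q)) ℂ, ‖PS * D * PS‖ ≤ ‖D‖ := by
    intro D
    calc ‖PS * D * PS‖ ≤ ‖PS * D‖ * ‖PS‖ := norm_mul_le _ _
      _ ≤ ‖PS‖ * ‖D‖ * ‖PS‖ := by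
          exact mul_le_mul_of_nonneg_right (norm_mul_le _ _) (norm_nonneg _)
      _ ≤ 1 * ‖D‖ * 1 :=
          mul_le_mul (mul_le_mul_of_nonneg_right hPSn (norm_nonneg _)) hPSn (norm_nonneg _)
            (by positivity)
      _ = ‖D‖ := by ring
  -- bound on ‖H - H'‖
  have hHH' : ‖H - H'‖ ≤ 2 * η * ‖H‖ := by
    have hfact : H - H' = Uᴴ * ((U - 1) * H - H * (U - 1)) := by
      have hexp : Uᴴ * ((U - 1) * H - H * (U - 1)) = Uᴴ * U * H - Uᴴ * H * U := by
        noncomm_ring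
      rw [hexp, hUU, Matrix.one_mul, ← hH'def]
    have hUHnorm : ‖Uᴴ‖ = 1 := by
      have : (Uᴴ : Matrix (Fin (2 ^ q)) (Fin (2 ^ q)) ℂ) ∈
          unitary (Matrix (Fin (2 ^ q)) (Fin (2 ^ q)) ℂ) := by
        constructor
        · simpa [Matrix.star_eq_conjTranspose] using hUU'
        · simpa [Matrix.star_eq_conjTranspose] using hUU
      exact CStarRing.norm_of_mem_unitary this
    have hU1 : ‖U - 1‖ ≤ η := by rwa [norm_sub_rev] at hUnorm
    calc ‖H - H'‖ = ‖Uᴴ * ((U - 1) * H - H * (U - 1))‖ := by rw [hfact]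
      _ ≤ ‖Uᴴ‖ * ‖(U - 1) * H - H * (U - 1)‖ := norm_mul_le _ _
      _ = ‖(U - 1) * H - H * (U - 1)‖ := by rw [hUHnorm, one_mul]
      _ ≤ ‖(U - 1) * H‖ + ‖H * (U - 1)‖ := norm_sub_le _ _
      _ ≤ ‖U - 1‖ * ‖H‖ + ‖H‖ * ‖U - 1‖ := by
          exact add_le_add (norm_mul_le _ _) (norm_mul_le _ _)
      _ ≤ η * ‖H‖ + ‖H‖ * η := by
          exact add_le_add (mul_le_mul_of_nonneg_right hU1 (norm_nonneg _))
            (mul_le_mul_of_nonneg_left hU1 (norm_nonneg _))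
      _ = 2 * η * ‖H‖ := by ring
  -- middle identity : PS * exp (c • H') * PS = PS * exp (c • B) * PS
  have hmid : PS * NormedSpace.exp (c • H') * PS = PS * NormedSpace.exp (c • B) * PS := by
    have hBPS : B * PS = B := by rw [hBdef, Matrix.mul_assoc, hPSproj]
    have hPSB : PS * B = B := by rw [hBdef, ← Matrix.mul_assoc, ← Matrix.mul_assoc, hPSproj]
    have e1 : PS * (c • H') = (c • B) * PS := by
      rw [Matrix.mul_smul, Matrix.smul_mul, hPH, ← hBdef, hBPS]
    have e2 : PS * (c • B) = (c • B) * PS := by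
      rw [Matrix.mul_smul, Matrix.smul_mul, hPSB, hBPS]
    rw [proj_exp PS (c • H') (c • B) e1, proj_exp PS (c • B) (c • B) e2]
  -- two exponential bounds
  have key1 : ‖NormedSpace.exp (c • H) - NormedSpace.exp (c • H')‖ ≤ t * (2 * η * ‖H‖) := by
    refine le_trans (exp_sub_exp_norm_le H H' hH hH'herm t ht) ?_
    exact mul_le_mul_of_nonneg_left hHH' ht
  have key2 : ‖NormedSpace.exp (c • B) - NormedSpace.exp (c • A)‖ ≤ t * ε := by
    refine le_trans (exp_sub_exp_norm_le B A hBherm hA t ht) ?_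
    have : ‖B - A‖ ≤ ε := hApprox
    exact mul_le_mul_of_nonneg_left this ht
  -- assemble
  have decomp : PS * NormedSpace.exp (c • H) * PS - PS * NormedSpace.exp (c • A) * PS =
      PS * (NormedSpace.exp (c • H) - NormedSpace.exp (c • H')) * PS +
        PS * (NormedSpace.exp (c • B) - NormedSpace.exp (c • A)) * PS := by
    rw [Matrix.mul_sub, Matrix.sub_mul, Matrix.mul_sub, Matrix.sub_mul]
    rw [← hmid]
    abel
  calc ‖PS * NormedSpace.exp (c • H) * PS - PS * NormedSpace.exp (c • A) * PS‖
      = ‖PS * (NormedSpace.exp (c • H) - NormedSpace.exp (c • H')) * PS +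
          PS * (NormedSpace.exp (c • B) - NormedSpace.exp (c • A)) * PS‖ := by rw [decomp]
    _ ≤ ‖PS * (NormedSpace.exp (c • H) - NormedSpace.exp (c • H')) * PS‖ +
          ‖PS * (NormedSpace.exp (c • B) - NormedSpace.exp (c • A)) * PS‖ := norm_add_le _ _
    _ ≤ ‖NormedSpace.exp (c • H) - NormedSpace.exp (c • H')‖ +
          ‖NormedSpace.exp (c • B) - NormedSpace.exp (c • A)‖ :=
        add_le_add (hPDP _) (hPDP _)
    _ ≤ t * (2 * η * ‖H‖) + t * ε := add_le_add key1 key2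
    _ = (2 * η * ‖H‖ + ε) * t := by ring
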